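/- For positive integers i, x, m with x ≤ i ≤ m and real θ > 0, the identity Σ_{n=x}^{i} C(i,n)·(-1)^n·(θ+n)^{(i-1)}·C(n,x)/(θ+n)^{(m)} = (i!·(-1)^x / ((i-x)!·x!·(m-i)!)) · Γ(m-x+1)·Γ(θ+x+i-1)/Γ(θ+i+m) holds, where y^{(k)} denotes the rising factorial and Γ is the gamma function. -/

import Mathlib

open Finset

/-- Rising factorial `a^{(k)} = a(a+1)⋯(a+k-1)`. -/
noncomputable def rise (a : ℝ) (k : ℕ) : ℝ := ∏ i ∈ Finset.range k, (a + i)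

/-- Falling factorial `a^{[k]} = a(a-1)⋯(a-k+1)`. -/
noncomputable def fall (a : ℝ) (k : ℕ) : ℝ := ∏ i ∈ Finset.range k, (a - i)

lemma rise_zero (a : ℝ) : rise a 0 = 1 := by simp [rise]

lemma rise_succ (a : ℝ) (k : ℕ) : rise a (k+1) = rise a k * (a + k) := by
  simp [rise, Finset.prod_range_succ]

lemma rise_succ' (a : ℝ) (k : ℕ) : rise a (k+1) = a * rise (a+1) k := by
  simp only [rise]
  rw [Finset.prod_range_succ']
  simp only [Nat.cast_zero, add_zero]
  rw [mul_comm]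
  congr 1
  exact Finset.prod_congr rfl fun j _ => by push_cast; ring

lemma rise_add (a : ℝ) (p q : ℕ) : rise a (p + q) = rise a p * rise (a + p) q := by
  simp only [rise]
  rw [Finset.prod_range_add]
  congr 1
  exact Finset.prod_congr rfl fun j _ => by push_cast; ring

lemma rise_pos {a : ℝ} (ha : 0 < a) (k : ℕ) : 0 < rise a k := by
  apply Finset.prod_pos
  intro j _
  positivity

lemma Gamma_rise {a : ℝ} (ha : 0 < a) (k : ℕ) :
    Real.Gamma (a + k) = rise a k * Real.Gamma a := by
  induction k with
  | zero => simp [rise_zero]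
  | succ n ih =>
      have h : a + (n+1 : ℕ) = (a + n) + 1 := by push_cast; ring
      rw [h, Real.Gamma_add_one (by positivity), ih, rise_succ]
      ring

lemma rise_factorial (j k : ℕ) :
    rise ((j:ℝ)+1) k * (j.factorial : ℝ) = ((j+k).factorial : ℝ) := by
  induction k with
  | zero => simp [rise_zero]
  | succ n ih =>
      rw [rise_succ]
      have : j + (n+1) = (j+n) + 1 := by omega
      rw [this, Nat.factorial_succ]
      push_cast
      nlinarith [ih]

lemma binom_step (K : ℕ) (u : ℕ → ℝ) :
    ∑ k ∈ range (K+2), ((K+1).choose k : ℝ) * u k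
      = ∑ k ∈ range (K+1), (K.choose k : ℝ) * (u k + u (k+1)) := by
  rw [Finset.sum_range_succ']
  simp only [Nat.choose_zero_right, Nat.cast_one, one_mul]
  have h2 : ∀ k, (((K+1).choose (k+1) : ℕ) : ℝ) = (K.choose k : ℝ) + (K.choose (k+1) : ℝ) := by
    intro k; rw [Nat.choose_succ_succ]; push_cast; ring
  simp only [h2, add_mul]
  rw [Finset.sum_add_distrib]
  have h3 : ∑ k ∈ range (K+1), (K.choose (k+1) : ℝ) * u (k+1)
      = ∑ k ∈ range (K+1), (K.choose k : ℝ) * u k - u 0 := by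
    rw [Finset.sum_range_succ]
    simp only [Nat.choose_succ_self, Nat.cast_zero, zero_mul, add_zero]
    rw [Finset.sum_range_succ' (fun k => (K.choose k : ℝ) * u k) K]
    simp
  rw [h3]
  simp only [mul_add]
  rw [Finset.sum_add_distrib]
  ring

lemma core (K : ℕ) : ∀ a b : ℝ,
    ∑ k ∈ range (K+1), (K.choose k : ℝ) * ((-1)^k * rise a k * rise (b+k) (K-k))
      = rise (b-a) K := by
  induction K with
  | zero => intro a b; simp [rise_zero]
  | succ K ih =>
      intro a b
      have hr : K + 1 + 1 = K + 2 := rfl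
      rw [hr]
      rw [binom_step K (fun k => (-1:ℝ)^k * rise a k * rise (b+k) (K+1-k))]
      have step : ∀ k ∈ range (K+1),
          (K.choose k : ℝ) * ((fun k => (-1:ℝ)^k * rise a k * rise (b+k) (K+1-k)) k
            + (fun k => (-1:ℝ)^k * rise a k * rise (b+k) (K+1-k)) (k+1))
          = (b - a) * ((K.choose k : ℝ) * ((-1)^k * rise a k * rise ((b+1)+k) (K-k))) := by
        intro k hk
        simp only []
        have hkK : k ≤ K := Nat.lt_succ_iff.mp (Finset.mem_range.mp hk)
        have e1 : K + 1 - k = (K - k) + 1 := by omega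
        have e2 : rise (b+k) (K+1-k) = (b+k) * rise (b+k+1) (K-k) := by
          rw [e1, rise_succ']
        have e3 : rise a (k+1) = rise a k * (a+k) := rise_succ a k
        have e4 : K + 1 - (k+1) = K - k := by omega
        rw [e2, e3, e4]
        have e5 : b + ((k:ℕ)+1 : ℕ) = b + (k:ℝ) + 1 := by push_cast; ring
        have e6 : b + 1 + (k:ℝ) = b + (k:ℝ) + 1 := by ring
        rw [e5, e6]
        
        ring
      rw [Finset.sum_congr rfl step, ← Finset.mul_sum, ih a (b+1)]
      have e7 : b + 1 - a = (b - a) + 1 := by ring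
      rw [e7, ← rise_succ']

theorem stmt_4 (i x m : ℕ) (hi : 0 < i) (hx0 : 0 < x) (hm0 : 0 < m)
    (hxi : x ≤ i) (him : i ≤ m) (θ : ℝ) (hθ : 0 < θ) :
    ∑ n ∈ Finset.Icc x i,
      (i.choose n : ℝ) * (-1 : ℝ) ^ n * rise (θ + n) (i - 1) * (n.choose x)
        / rise (θ + n) m
    = (i.factorial : ℝ) * (-1 : ℝ) ^ x
        / ((i - x).factorial * x.factorial * (m - i).factorial)
        * (Real.Gamma ((m : ℝ) - x + 1) * Real.Gamma (θ + x + i - 1)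
            / Real.Gamma (θ + i + m)) := by
  have hxm : x ≤ m := hxi.trans him
  set a : ℝ := θ + x + i - 1 with ha_def
  set K : ℕ := i - x with hK_def
  have hx1 : (1:ℝ) ≤ (x:ℝ) := by exact_mod_cast hx0
  have hi1 : (1:ℝ) ≤ (i:ℝ) := by exact_mod_cast hi
  have ha : 0 < a := by rw [ha_def]; nlinarith
  set R : ℝ := rise a (m - x + 1) with hR_def
  have hRpos : 0 < R := rise_pos ha _
  have hΓa : 0 < Real.Gamma a := Real.Gamma_pos_of_pos ha
  -- Gamma rewrites
  have hG1 : Real.Gamma (θ + i + m) = R * Real.Gamma a := by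
    have h : θ + (i:ℝ) + m = a + ((m - x + 1 : ℕ):ℝ) := by
      rw [ha_def]
      push_cast [Nat.cast_sub hxm]
      ring
    rw [h, Gamma_rise ha]
  have hG2 : Real.Gamma ((m:ℝ) - x + 1) = ((m-x).factorial : ℝ) := by
    have h : (m:ℝ) - x + 1 = ((m - x : ℕ):ℝ) + 1 := by
      push_cast [Nat.cast_sub hxm]; ring
    rw [h, Real.Gamma_nat_eq_factorial]
  -- rewrite each summand with common denominator R
  have key : ∀ n ∈ Finset.Icc x i,
      (i.choose n : ℝ) * (-1 : ℝ) ^ n * rise (θ + n) (i - 1) * (n.choose x)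
        / rise (θ + n) m
      = (i.choose n : ℝ) * (-1 : ℝ) ^ n * (n.choose x : ℝ)
          * (rise a (n-x) * rise (θ + m + n) (i-n)) / R := by
    intro n hn
    obtain ⟨hxn, hni⟩ := Finset.mem_Icc.mp hn
    have hP : 0 < rise (θ + (n:ℝ)) (i-1) := rise_pos (by positivity) _
    have hQ : 0 < rise (θ + (n:ℝ) + ((i-1:ℕ):ℝ)) (m-i+1) := by
      apply rise_pos; positivity
    have hsplit : rise (θ + (n:ℝ)) m
        = rise (θ + n) (i-1) * rise (θ + (n:ℝ) + ((i-1:ℕ):ℝ)) (m-i+1) := by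
      have hm : m = (i-1) + (m-i+1) := by omega
      rw [hm, rise_add]
      rw [← hm]
    have e1 : a + ((n-x:ℕ):ℝ) = θ + (n:ℝ) + ((i-1:ℕ):ℝ) := by
      rw [ha_def]; push_cast [Nat.cast_sub hxn, Nat.cast_sub hi]; ring
    have e2 : a + ((n-x:ℕ):ℝ) + ((m-i+1:ℕ):ℝ) = θ + (m:ℝ) + n := by
      rw [ha_def]; push_cast [Nat.cast_sub hxn, Nat.cast_sub him]; ring
    have hRsplit : R = rise a (n-x) * (rise (θ + (n:ℝ) + ((i-1:ℕ):ℝ)) (m-i+1)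
        * rise (θ + (m:ℝ) + n) (i-n)) := by
      rw [hR_def]
      have hm2 : m - x + 1 = (n-x) + ((m-i+1) + (i-n)) := by omega
      rw [hm2, rise_add, rise_add, e1, rise_add]
      rw [← e1, e2]
    have hA : 0 < rise a (n-x) := rise_pos ha _
    have hB : 0 < rise (θ + (m:ℝ) + n) (i-n) := rise_pos (by positivity) _
    rw [hsplit, hRsplit]
    rw [div_eq_div_iff (by positivity) (by positivity)]
    ring
  rw [Finset.sum_congr rfl key, ← Finset.sum_div]
  -- reindex the sum
  have hIcc : Finset.Icc x i = Finset.Ico x (i+1) := by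
    rw [Finset.Ico_add_one_right_eq_Icc]
  rw [hIcc, Finset.sum_Ico_eq_sum_range]
  have hrange : i + 1 - x = K + 1 := by omega
  rw [hrange]
  set b : ℝ := θ + m + x with hb_def
  have keysum : ∀ k ∈ range (K+1),
      (i.choose (x+k) : ℝ) * (-1 : ℝ) ^ (x+k) * ((x+k).choose x : ℝ)
          * (rise a ((x+k)-x) * rise (θ + m + (x+k:ℕ)) (i-(x+k)))
      = ((i.choose x : ℝ) * (-1:ℝ)^x)
          * ((K.choose k : ℝ) * ((-1)^k * rise a k * rise (b + k) (K-k))) := by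
    intro k hk
    have hkK : k ≤ K := Nat.lt_succ_iff.mp (Finset.mem_range.mp hk)
    have hxk : x + k ≤ i := by omega
    have hch : (i.choose (x+k) : ℝ) * ((x+k).choose x : ℝ)
        = (i.choose x : ℝ) * (K.choose k : ℝ) := by
      have := Nat.choose_mul (n := i) (k := x+k) (s := x) (Nat.le_add_right x k)
      have h2 : (x+k) - x = k := by omega
      rw [h2] at this
      exact_mod_cast this
    have h3 : (x+k) - x = k := by omega
    have h4 : i - (x+k) = K - k := by omega
    have h5 : θ + (m:ℝ) + ((x+k:ℕ):ℝ) = b + k := by rw [hb_def]; push_cast; ring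
    rw [h3, h4, h5]
    have h6 : (-1:ℝ)^(x+k) = (-1:ℝ)^x * (-1:ℝ)^k := pow_add _ _ _
    rw [h6]
    linear_combination (((-1:ℝ)^x * (-1:ℝ)^k) * (rise a k * rise (b + (k:ℝ)) (K-k))) * hch
  rw [Finset.sum_congr rfl keysum, ← Finset.mul_sum, core K a b]
  -- compute rise (b - a) K
  have hba : b - a = ((m-i:ℕ):ℝ) + 1 := by
    rw [hb_def, ha_def]; push_cast [Nat.cast_sub him]; ring
  have hrb : rise (b-a) K * ((m-i).factorial : ℝ) = ((m-x).factorial : ℝ) := by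
    rw [hba, rise_factorial]
    congr 2
    omega
  -- finish
  rw [hG1, hG2]
  have hfac : (i.choose x : ℝ) * (x.factorial : ℝ) * ((i-x).factorial : ℝ)
      = (i.factorial : ℝ) := by exact_mod_cast Nat.choose_mul_factorial_mul_factorial hxi
  have hGcancel : ((m-x).factorial : ℝ) * Real.Gamma a / (R * Real.Gamma a)
      = ((m-x).factorial : ℝ) / R := by
    rw [mul_div_mul_right _ _ (ne_of_gt hΓa)]
  rw [hGcancel]
  have hf1 : (((i-x).factorial : ℕ):ℝ) ≠ 0 := Nat.cast_ne_zero.mpr (Nat.factorial_ne_zero _)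
  have hf2 : ((x.factorial : ℕ):ℝ) ≠ 0 := Nat.cast_ne_zero.mpr (Nat.factorial_ne_zero _)
  have hf3 : (((m-i).factorial : ℕ):ℝ) ≠ 0 := Nat.cast_ne_zero.mpr (Nat.factorial_ne_zero _)
  field_simp
  linear_combination (rise (b-a) K * (((m-i).factorial:ℕ):ℝ)) * hfac + (((i.factorial:ℕ):ℝ)) * hrb
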